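/- arXiv:2204.03302 — 3 statements merged into one kernel-verified Lean document; each statement's English description precedes it below -/
import Mathlib

section
/- Let H be a complex Hilbert space and let F : H → H be a compact bounded linear operator that is normal (F ∘ F* = F* ∘ F). Then for every real number μ > 0, μ is an eigenvalue of F* ∘ F (i.e. there exists v ≠ 0 with (F*∘F)v = μ v) if and only if there exists λ ∈ ℂ with |λ|² = μ such that λ is an eigenvalue of F (i.e. F w = λ w for some w ≠ 0). -/
open ContinuousLinearMap Complex

-- normal operator: eigenvector of F with eigenvalue lam is eigenvector of F* with conj lam
lemma adj_eigen {H : Type*} [NormedAddCommGroup H] [InnerProductSpace ℂ H] [CompleteSpace H]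
    (F : H →L[ℂ] H)
    (hF : F ∘L ContinuousLinearMap.adjoint F = ContinuousLinearMap.adjoint F ∘L F)
    (lam : ℂ) {w : H} (hw : F w = lam • w) :
    ContinuousLinearMap.adjoint F w = (starRingEnd ℂ lam) • w := by
  set G : H →L[ℂ] H := F - lam • 1 with hG
  have hGw : G w = 0 := by
    simp [hG, sub_eq_zero, hw]
  have hstarG : star G = ContinuousLinearMap.adjoint F - (starRingEnd ℂ lam) • 1 := by
    simp [hG, star_sub, star_smul, ContinuousLinearMap.star_eq_adjoint]
  have hnormal : G * star G = star G * G := by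
    have hc : Commute (star F) F := by
      have := hF
      simpa [ContinuousLinearMap.star_eq_adjoint, Commute, SemiconjBy,
        ContinuousLinearMap.mul_def] using this.symm
    have h1 : Commute (star G) G := by
      rw [hstarG, hG]
      simp only [← ContinuousLinearMap.star_eq_adjoint]
      exact ((hc.sub_left (Commute.smul_left (Commute.one_left F) _)).sub_right
        (Commute.smul_right ((Commute.one_right (star F)).sub_left
          (Commute.smul_left (Commute.one_left 1) _)) _))
    exact h1.symm
  have key : (inner ℂ (star G w) (star G w) : ℂ) = 0 := by
    have h1 : (inner ℂ (star G w) (star G w) : ℂ) = inner ℂ w (G (star G w)) := by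
      rw [ContinuousLinearMap.star_eq_adjoint]
      exact ContinuousLinearMap.adjoint_inner_left G (ContinuousLinearMap.adjoint G w) w
    have h2 : G (star G w) = star G (G w) := by
      have := congrArg (fun A : H →L[ℂ] H => A w) hnormal
      simpa [ContinuousLinearMap.mul_def] using this
    rw [h1, h2, hGw]
    simp
  have : star G w = 0 := by
    rwa [inner_self_eq_zero] at key
  rw [hstarG] at this
  have := sub_eq_zero.mp this
  simpa using this

/-- For a compact normal operator `F` on a complex Hilbert space and `μ > 0`:
`μ` is an eigenvalue of `F* ∘ F` iff `μ = |λ|²` for some eigenvalue `λ` of `F`. -/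
theorem stmt_5 {H : Type*} [NormedAddCommGroup H] [InnerProductSpace ℂ H] [CompleteSpace H]
    (F : H →L[ℂ] H) (hcomp : IsCompactOperator F)
    (hF : F ∘L ContinuousLinearMap.adjoint F = ContinuousLinearMap.adjoint F ∘L F)
    (μ : ℝ) (hμ : 0 < μ) :
    (∃ v : H, v ≠ 0 ∧ (ContinuousLinearMap.adjoint F ∘L F) v = (μ : ℂ) • v) ↔
      (∃ lam : ℂ, ‖lam‖ ^ 2 = μ ∧ ∃ w : H, w ≠ 0 ∧ F w = lam • w) := by
  set T : H →L[ℂ] H := ContinuousLinearMap.adjoint F ∘L F with hT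
  constructor
  · rintro ⟨v, hv0, hv⟩
    -- the eigenspace
    set S : H →L[ℂ] H := T - (μ : ℂ) • 1 with hS
    set E : Submodule ℂ H := LinearMap.ker (S : H →ₗ[ℂ] H) with hE
    have hmemE : ∀ x : H, x ∈ E ↔ T x = (μ : ℂ) • x := by
      intro x
      simp [hE, hS, LinearMap.mem_ker, sub_eq_zero]
    have hvE : v ∈ E := (hmemE v).mpr hv
    have hEclosed : IsClosed (E : Set H) := ContinuousLinearMap.isClosed_ker S
    -- T is compact
    have hTcomp : IsCompactOperator (T : H →ₗ[ℂ] H) :=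
      hcomp.clm_comp (ContinuousLinearMap.adjoint F)
    obtain ⟨K, hK, hKsub⟩ := hTcomp.image_closedBall_subset_compact (𝕜₁ := ℂ) 1
    -- the unit ball of E is compact
    have hball : IsCompact {x : H | x ∈ E ∧ ‖x‖ ≤ 1} := by
      apply IsCompact.of_isClosed_subset (hK.smul ((μ : ℂ)⁻¹))
      · exact hEclosed.inter (isClosed_le continuous_norm continuous_const)
      · rintro x ⟨hxE, hx1⟩
        refine ⟨T x, hKsub ⟨x, by simpa [Metric.mem_closedBall, dist_zero_right] using hx1, rfl⟩, ?_⟩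
        rw [(hmemE x).mp hxE]
        show (μ : ℂ)⁻¹ • ((μ : ℂ) • x) = x
        rw [smul_smul, inv_mul_cancel₀ (by exact_mod_cast hμ.ne'), one_smul]
    have hfin : FiniteDimensional ℂ E := by
      apply FiniteDimensional.of_isCompact_closedBall₀ ℂ (r := 1) one_pos
      rw [Topology.IsEmbedding.subtypeVal.isCompact_iff]
      convert hball using 1
      ext x
      constructor
      · rintro ⟨y, hy, rfl⟩
        exact ⟨y.2, by simpa [Metric.mem_closedBall, dist_zero_right] using hy⟩
      · rintro ⟨hxE, hx1⟩
        exact ⟨⟨x, hxE⟩, by simpa [Metric.mem_closedBall, dist_zero_right] using hx1, rfl⟩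
    have hnt : Nontrivial E := ⟨⟨⟨v, hvE⟩, 0, by simpa [Subtype.ext_iff] using hv0⟩⟩
    -- F maps E into E
    have hmaps : ∀ x ∈ E, F x ∈ E := by
      intro x hx
      rw [hmemE] at hx ⊢
      have hcomm : T (F x) = F (T x) := by
        have h := congrArg (fun A : H →L[ℂ] H => A (F x)) hF
        rw [hT] at h ⊢
        simp only [ContinuousLinearMap.comp_apply] at h ⊢
        exact h.symm
      rw [hcomm, hx, map_smul]
    set G : Module.End ℂ E := LinearMap.restrict (F : H →ₗ[ℂ] H) hmaps with hGdef
    obtain ⟨lam, hlam⟩ := Module.End.exists_eigenvalue G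
    obtain ⟨w, hw⟩ := hlam.exists_hasEigenvector
    have hw0 : (w : H) ≠ 0 := fun h => hw.2 ((Submodule.coe_eq_zero).mp h)
    have hFw : F (w : H) = lam • (w : H) := by
      have := hw.apply_eq_smul
      have := congrArg (Subtype.val) this
      simpa [hGdef, LinearMap.restrict_apply] using this
    refine ⟨lam, ?_, w, hw0, hFw⟩
    -- compute |lam|^2 = μ
    have hTw : T (w : H) = (μ : ℂ) • (w : H) := (hmemE _).mp w.2
    have hinner : (inner ℂ (T (w : H)) (w : H) : ℂ) = inner ℂ (F (w : H)) (F (w : H)) := by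
      simp only [hT, ContinuousLinearMap.comp_apply]
      exact ContinuousLinearMap.adjoint_inner_left F _ _
    rw [hTw, hFw] at hinner
    rw [inner_smul_left, inner_smul_left, inner_smul_right] at hinner
    have hiw : (inner ℂ (w : H) (w : H) : ℂ) ≠ 0 := inner_self_ne_zero.mpr hw0
    rw [Complex.conj_ofReal] at hinner
    have hmul : (μ : ℂ) * inner ℂ (w : H) (w : H) =
        ((starRingEnd ℂ) lam * lam) * inner ℂ (w : H) (w : H) := by
      linear_combination hinner
    have heq : (μ : ℂ) = (starRingEnd ℂ) lam * lam := mul_right_cancel₀ hiw hmul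
    have habs : ((‖lam‖ ^ 2 : ℝ) : ℂ) = (μ : ℂ) := by
      rw [heq]
      rw [← Complex.normSq_eq_conj_mul_self, ← Complex.sq_norm]
    exact_mod_cast habs
  · rintro ⟨lam, hlam, w, hw0, hFw⟩
    refine ⟨w, hw0, ?_⟩
    have hadj := adj_eigen F hF lam hFw
    rw [ContinuousLinearMap.comp_apply, hFw, map_smul, hadj, smul_smul]
    congr 1
    rw [mul_comm, ← Complex.normSq_eq_conj_mul_self, ← hlam, ← Complex.sq_norm]
end

section
/- Let μ > 0, λ ∈ ℝ with λ + μ > 0, ω > 0, κ_p = ω/√(λ+2μ), κ_s = ω/√μ. Let f_p, f_s : S² → ℂ³ be continuous functions such that for every α ∈ S², f_p(α) is a complex scalar multiple of α and f_s(α)·α = 0. Then the elastic Herglotz wave u_f(x) = ∫_{S²} [ exp(i κ_p α·x) f_p(α) + exp(i κ_s α·x) f_s(α) ] dσ(α) is a smooth vector field on ℝ³ and satisfies the Navier equation μ Δu_f + (λ+μ) ∇(∇·u_f) + ω² u_f = 0 at every point of ℝ³. -/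
open Real Metric

noncomputable section

/-- The Euclidean space `ℝ³`. -/
abbrev E3 := EuclideanSpace ℝ (Fin 3)

/-- Complex 3-vectors. -/
abbrev V3 := Fin 3 → ℂ

/-- The `j`-th standard basis vector of `ℝ³`. -/
def e3 (j : Fin 3) : E3 := EuclideanSpace.single j 1

/-- The `j`-th partial derivative of a scalar field `f : ℝ³ → ℂ`. -/
def pd (j : Fin 3) (f : E3 → ℂ) : E3 → ℂ := fun x => fderiv ℝ f x (e3 j)

/-- The componentwise Laplacian of a vector field `u : ℝ³ → ℂ³`. -/
def vecLap (u : E3 → V3) : E3 → V3 := fun x i => ∑ j, pd j (pd j (fun y => u y i)) x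

/-- The divergence `∇·u` of a vector field `u : ℝ³ → ℂ³`. -/
def divg (u : E3 → V3) : E3 → ℂ := fun x => ∑ j, pd j (fun y => u y j) x

/-- The gradient `∇f` of a scalar field `f : ℝ³ → ℂ`. -/
def grad (f : E3 → ℂ) : E3 → V3 := fun x j => pd j f x

/-- `u` satisfies the Navier equation `μ Δu + (λ+μ) ∇(∇·u) + ω² u = 0` at the point `x`. -/
def IsNavierSolutionAt (μ lam ω : ℝ) (u : E3 → V3) (x : E3) : Prop :=
  μ • vecLap u x + (lam + μ) • grad (divg u) x + ω ^ 2 • u x = 0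

open MeasureTheory

/-- The surface measure on the unit sphere `S² ⊆ ℝ³` (rotation invariant, total mass `4π`). -/
def sphereMeasure : Measure (sphere (0 : E3) 1) := (volume : Measure E3).toSphere

/-- The elastic Herglotz wave with kernel `(f_p, f_s)`:
`u_f(x) = ∫_{S²} [e^{iκ_p α·x} f_p(α) + e^{iκ_s α·x} f_s(α)] dσ(α)`. -/
def herglotz (κp κs : ℝ) (fp fs : sphere (0 : E3) 1 → V3) : E3 → V3 := fun x =>
  ∫ α : sphere (0 : E3) 1,
    (Complex.exp (Complex.I * (κp : ℂ) * ((inner ℝ (α : E3) x : ℝ) : ℂ)) • fp α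
      + Complex.exp (Complex.I * (κs : ℂ) * ((inner ℝ (α : E3) x : ℝ) : ℂ)) • fs α) ∂sphereMeasure

/- ### Auxiliary material -/

namespace HerglotzAux

abbrev S2 := sphere (0 : E3) 1

/-- The plane-wave kernel. -/
def ker (κ : ℝ) (α : S2) (x : E3) : ℂ :=
  Complex.exp (Complex.I * (κ : ℂ) * ((inner ℝ (α : E3) x : ℝ) : ℂ))

/-- Scalar Herglotz-type integral. -/
def Ig (κ : ℝ) (g : S2 → ℂ) : E3 → ℂ :=
  fun x => ∫ α, ker κ α x * g α ∂sphereMeasure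

/-- The multiplier appearing when differentiating in the `j`-th direction. -/
def mker (κ : ℝ) (j : Fin 3) (α : S2) : ℂ :=
  Complex.I * (κ : ℂ) * (((α : E3) j : ℝ) : ℂ)

def M3 (α : S2) : E3 →L[ℝ] ℂ := Complex.ofRealCLM.comp (innerSL ℝ (α : E3))

def MjE (j : Fin 3) : E3 →L[ℝ] ℂ := Complex.ofRealCLM.comp (innerSL ℝ (e3 j))

def Tj (j : Fin 3) : ℂ →L[ℝ] (E3 →L[ℝ] ℂ) :=
  (ContinuousLinearMap.lsmul ℝ ℂ).flip (Complex.ofRealCLM.comp (innerSL ℝ (e3 j)))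

def Fd (κ : ℝ) (g : S2 → ℂ) (α : S2) (x : E3) : E3 →L[ℝ] ℂ :=
  (ker κ α x * g α * (Complex.I * (κ : ℂ))) • M3 α

lemma M3_apply (α : S2) (v : E3) : M3 α v = ((inner ℝ (α : E3) v : ℝ) : ℂ) := rfl

lemma contKer (κ : ℝ) (x : E3) : Continuous fun α : S2 => ker κ α x := by
  unfold ker
  exact Complex.continuous_exp.comp (continuous_const.mul
    (Complex.continuous_ofReal.comp (continuous_subtype_val.inner continuous_const)))

lemma contCoord (j : Fin 3) : Continuous fun α : S2 => (((α : E3) j : ℝ) : ℂ) :=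
  Complex.continuous_ofReal.comp
    ((EuclideanSpace.proj (𝕜 := ℝ) j).continuous.comp continuous_subtype_val)

lemma contMker (κ : ℝ) (j : Fin 3) : Continuous (mker κ j) :=
  continuous_const.mul (contCoord j)

instance : IsFiniteMeasure sphereMeasure := by
  unfold sphereMeasure; infer_instance

lemma integrableC {E : Type*} [NormedAddCommGroup E] {f : S2 → E} (h : Continuous f) :
    Integrable f sphereMeasure :=
  h.integrable_of_hasCompactSupport (HasCompactSupport.of_compactSpace f)

lemma norm_ker (κ : ℝ) (α : S2) (x : E3) : ‖ker κ α x‖ = 1 := by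
  unfold ker
  rw [Complex.norm_exp]
  simp [Complex.mul_re]

lemma hasFDerivAt_kermul (κ : ℝ) (g : S2 → ℂ) (α : S2) (x : E3) :
    HasFDerivAt (fun y => ker κ α y * g α) (Fd κ g α x) x := by
  have h1 : HasFDerivAt (fun y : E3 => ((inner ℝ (α : E3) y : ℝ) : ℂ)) (M3 α) x :=
    Complex.ofRealCLM.hasFDerivAt.comp x (innerSL ℝ (α : E3)).hasFDerivAt
  have h2 := ((h1.const_mul (Complex.I * (κ : ℂ))).cexp).mul_const (g α)
  have heq : (Complex.exp (Complex.I * (κ : ℂ) * ((inner ℝ (α : E3) x : ℝ) : ℂ)) * g α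
        * (Complex.I * (κ : ℂ))) • M3 α
      = g α • Complex.exp (Complex.I * (κ : ℂ) * ((inner ℝ (α : E3) x : ℝ) : ℂ))
        • (Complex.I * (κ : ℂ)) • M3 α := by
    rw [smul_smul, smul_smul]
    congr 1
    ring
  show HasFDerivAt (fun y => Complex.exp (Complex.I * (κ : ℂ) * ((inner ℝ (α : E3) y : ℝ) : ℂ))
      * g α) ((Complex.exp (Complex.I * (κ : ℂ) * ((inner ℝ (α : E3) x : ℝ) : ℂ)) * g α
        * (Complex.I * (κ : ℂ))) • M3 α) x
  rw [heq]
  exact h2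

lemma norm_M3_le (α : S2) : ‖M3 α‖ ≤ 1 := by
  refine ContinuousLinearMap.opNorm_le_bound _ zero_le_one fun v => ?_
  rw [M3_apply, Complex.norm_real]
  calc ‖(inner ℝ (α : E3) v : ℝ)‖ = |(inner ℝ (α : E3) v : ℝ)| := rfl
    _ ≤ ‖(α : E3)‖ * ‖v‖ := abs_real_inner_le_norm _ _
    _ = 1 * ‖v‖ := by rw [norm_eq_of_mem_sphere α]

lemma norm_Fd_le (κ : ℝ) (g : S2 → ℂ) (α : S2) (x : E3) :
    ‖Fd κ g α x‖ ≤ |κ| * ‖g α‖ := by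
  unfold Fd
  have h1 : ‖ker κ α x * g α * (Complex.I * (κ : ℂ))‖ = ‖g α‖ * |κ| := by
    rw [norm_mul, norm_mul, norm_ker, one_mul, norm_mul]
    simp [Complex.norm_I, Complex.norm_real]
  refine ContinuousLinearMap.opNorm_le_bound _ (by positivity) fun v => ?_
  simp only [ContinuousLinearMap.coe_smul', Pi.smul_apply, smul_eq_mul]
  rw [norm_mul, h1]
  have hMv : ‖M3 α v‖ ≤ ‖v‖ := by
    rw [M3_apply, Complex.norm_real]
    exact (abs_real_inner_le_norm _ _).trans (by rw [norm_eq_of_mem_sphere α, one_mul])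
  calc ‖g α‖ * |κ| * ‖M3 α v‖ ≤ ‖g α‖ * |κ| * ‖v‖ := by gcongr
    _ = |κ| * ‖g α‖ * ‖v‖ := by ring

lemma contFd (κ : ℝ) {g : S2 → ℂ} (hg : Continuous g) (x : E3) :
    Continuous fun α : S2 => Fd κ g α x := by
  unfold Fd
  apply Continuous.fun_smul
  · exact ((contKer κ x).mul hg).mul continuous_const
  · have h : Continuous fun α : S2 =>
        (ContinuousLinearMap.compL ℝ E3 ℝ ℂ Complex.ofRealCLM) (innerSL ℝ (α : E3)) :=
      (ContinuousLinearMap.compL ℝ E3 ℝ ℂ Complex.ofRealCLM).continuous.comp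
        ((innerSL ℝ).continuous.comp continuous_subtype_val)
    exact h

lemma hasFDerivAt_Ig (κ : ℝ) {g : S2 → ℂ} (hg : Continuous g) (x₀ : E3) :
    HasFDerivAt (Ig κ g) (∫ α, Fd κ g α x₀ ∂sphereMeasure) x₀ := by
  refine hasFDerivAt_integral_of_dominated_of_fderiv_le (F := fun x α => ker κ α x * g α)
    (F' := fun x α => Fd κ g α x) (bound := fun α => |κ| * ‖g α‖) (s := ball x₀ 1) (ball_mem_nhds x₀ one_pos) ?_ ?_ ?_ ?_ ?_ ?_
  · exact Filter.Eventually.of_forall fun x => ((contKer κ x).mul hg).aestronglyMeasurable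
  · exact integrableC ((contKer κ x₀).mul hg)
  · exact (contFd κ hg x₀).aestronglyMeasurable
  · exact ae_of_all _ fun α x _ => norm_Fd_le κ g α x
  · exact integrableC (continuous_const.mul hg.norm)
  · exact ae_of_all _ fun α x _ => hasFDerivAt_kermul κ g α x

lemma diff_Ig (κ : ℝ) {g : S2 → ℂ} (hg : Continuous g) : Differentiable ℝ (Ig κ g) :=
  fun x => (hasFDerivAt_Ig κ hg x).differentiableAt

lemma inner_eval (α : S2) (j : Fin 3) : (inner ℝ (α : E3) (e3 j) : ℝ) = (α : E3) j := by
  simp [e3, EuclideanSpace.inner_single_right]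

lemma pd_Ig (κ : ℝ) {g : S2 → ℂ} (hg : Continuous g) (j : Fin 3) :
    pd j (Ig κ g) = Ig κ (fun α => mker κ j α * g α) := by
  funext x
  simp only [pd]
  rw [(hasFDerivAt_Ig κ hg x).fderiv,
    ContinuousLinearMap.integral_apply (integrableC (contFd κ hg x))]
  simp only [Ig]
  refine integral_congr_ae (ae_of_all _ fun α => ?_)
  simp only [Fd, ContinuousLinearMap.coe_smul', Pi.smul_apply, M3_apply, inner_eval,
    smul_eq_mul, mker]
  ring

lemma pd_add {f g : E3 → ℂ} (hf : Differentiable ℝ f) (hg : Differentiable ℝ g) (j : Fin 3) :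
    pd j (fun y => f y + g y) = fun x => pd j f x + pd j g x := by
  funext x
  simp only [pd]
  rw [fderiv_fun_add (hf x) (hg x)]
  simp

lemma inner_coords (α : S2) (v : E3) : (inner ℝ (α : E3) v : ℝ) = ∑ j, (α : E3) j * v j := by
  rw [PiLp.inner_apply]
  simp [RCLike.inner_apply, mul_comm]

lemma fderiv_Ig (κ : ℝ) {g : S2 → ℂ} (hg : Continuous g) :
    fderiv ℝ (Ig κ g) = fun x => ∑ j : Fin 3, Ig κ (fun α => mker κ j α * g α) x • MjE j := by
  funext x
  rw [(hasFDerivAt_Ig κ hg x).fderiv]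
  ext v
  rw [ContinuousLinearMap.integral_apply (integrableC (contFd κ hg x))]
  have hpt : ∀ α : S2, Fd κ g α x v
      = ∑ j : Fin 3, (ker κ α x * (mker κ j α * g α)) * ((v j : ℝ) : ℂ) := by
    intro α
    simp only [Fd, ContinuousLinearMap.coe_smul', Pi.smul_apply, M3_apply, smul_eq_mul]
    rw [inner_coords]
    push_cast
    rw [Finset.mul_sum]
    refine Finset.sum_congr rfl fun j _ => ?_
    simp only [mker]
    ring
  rw [integral_congr_ae (ae_of_all _ hpt),
    integral_finset_sum _ (fun j _ =>
      (integrableC ((contKer κ x).fun_mul ((contMker κ j).fun_mul hg))).mul_const _)]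
  simp only [ContinuousLinearMap.sum_apply, ContinuousLinearMap.coe_smul', Pi.smul_apply,
    smul_eq_mul]
  refine Finset.sum_congr rfl fun j _ => ?_
  have hMj : MjE j v = ((v j : ℝ) : ℂ) := by
    simp [MjE, e3, EuclideanSpace.inner_single_left]
  rw [integral_mul_const, hMj]
  rfl

lemma contDiff_Ig (κ : ℝ) : ∀ (n : ℕ) {g : S2 → ℂ}, Continuous g →
    ContDiff ℝ (n : ℕ) (Ig κ g) := by
  intro n
  induction n with
  | zero =>
    intro g hg
    exact_mod_cast contDiff_zero.2 (diff_Ig κ hg).continuous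
  | succ n ih =>
    intro g hg
    rw [show ((n + 1 : ℕ) : WithTop ℕ∞) = (n : WithTop ℕ∞) + 1 by norm_cast]
    rw [contDiff_succ_iff_fderiv]
    refine ⟨diff_Ig κ hg, fun h => absurd h (by simp), ?_⟩
    rw [fderiv_Ig κ hg]
    apply ContDiff.sum
    intro j _
    have hc := (Tj j).contDiff.comp (ih ((contMker κ j).fun_mul hg))
    have hTj : ∀ c : ℂ, Tj j c = c • MjE j := fun c => rfl
    exact hc

lemma contDiff_Ig_top (κ : ℝ) {g : S2 → ℂ} (hg : Continuous g) :
    ContDiff ℝ ((⊤ : ℕ∞) : WithTop ℕ∞) (Ig κ g) :=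
  contDiff_infty.2 fun n => contDiff_Ig κ n hg

lemma Ig_zero (κ : ℝ) : Ig κ (fun _ => (0 : ℂ)) = fun _ => 0 := by
  funext x; simp [Ig]

lemma Ig_congr (κ : ℝ) {g₁ g₂ : S2 → ℂ} (h : ∀ α, g₁ α = g₂ α) : Ig κ g₁ = Ig κ g₂ := by
  rw [funext h]

lemma Ig_const_mul (κ : ℝ) (c : ℂ) (g : S2 → ℂ) (x : E3) :
    Ig κ (fun α => c * g α) x = c * Ig κ g x := by
  simp only [Ig]
  rw [show (fun α : S2 => ker κ α x * (c * g α)) = fun α : S2 => c * (ker κ α x * g α) from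
    funext fun α => by ring]
  exact integral_const_mul c _

lemma Ig_sum (κ : ℝ) (G : Fin 3 → S2 → ℂ) (hG : ∀ j, Continuous (G j)) (x : E3) :
    ∑ j, Ig κ (G j) x = Ig κ (fun α => ∑ j, G j α) x := by
  simp only [Ig]
  rw [← integral_finset_sum _ (fun j _ => integrableC ((contKer κ x).fun_mul (hG j)))]
  congr 1
  funext α
  rw [Finset.mul_sum]

lemma coord_sq (α : S2) : ∑ j : Fin 3, ((α : E3) j) ^ 2 = 1 := by
  have h := real_inner_self_eq_norm_sq (α : E3)
  rw [norm_eq_of_mem_sphere α, inner_coords] at h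
  simpa [pow_two] using h

lemma coord_sq_c (α : S2) : ∑ j : Fin 3, (((α : E3) j : ℝ) : ℂ) ^ 2 = 1 := by
  have h : ((∑ j : Fin 3, ((α : E3) j) ^ 2 : ℝ) : ℂ) = 1 := by rw [coord_sq]; norm_num
  push_cast at h
  exact h

lemma sum_m2 (κ : ℝ) {g : S2 → ℂ} (hg : Continuous g) (x : E3) :
    ∑ j : Fin 3, Ig κ (fun α => mker κ j α * (mker κ j α * g α)) x
      = -((κ : ℂ) ^ 2) * Ig κ g x := by
  rw [Ig_sum κ _ (fun j => (contMker κ j).fun_mul ((contMker κ j).fun_mul hg)) x]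
  rw [show (fun α : S2 => ∑ j, mker κ j α * (mker κ j α * g α))
      = fun α : S2 => -((κ : ℂ) ^ 2) * g α from funext fun α => ?_]
  · exact Ig_const_mul κ _ g x
  · have h1 : ∀ j : Fin 3, mker κ j α * (mker κ j α * g α)
        = -((κ : ℂ) ^ 2) * ((((α : E3) j : ℝ) : ℂ)) ^ 2 * g α := fun j => by
      simp only [mker]
      linear_combination ((κ : ℂ) ^ 2 * (((α : E3) j : ℝ) : ℂ) ^ 2 * g α) * Complex.I_mul_I
    rw [Finset.sum_congr rfl fun j _ => h1 j]
    rw [show ∑ j : Fin 3, -((κ : ℂ) ^ 2) * ((((α : E3) j : ℝ) : ℂ)) ^ 2 * g α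
        = -((κ : ℂ) ^ 2) * (∑ j : Fin 3, ((((α : E3) j : ℝ) : ℂ)) ^ 2) * g α from by
      rw [Finset.mul_sum, Finset.sum_mul]]
    rw [coord_sq_c]
    ring

end HerglotzAux

open HerglotzAux

lemma herglotz_eq (κp κs : ℝ) (fp fs : S2 → V3) (hfpc : Continuous fp) (hfsc : Continuous fs) :
    herglotz κp κs fp fs
      = fun x i => Ig κp (fun α => fp α i) x + Ig κs (fun α => fs α i) x := by
  funext x i
  have hcont : Continuous fun α : S2 => ker κp α x • fp α + ker κs α x • fs α :=
    (((contKer κp x).smul hfpc)).add ((contKer κs x).smul hfsc)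
  have h0 : herglotz κp κs fp fs x
      = ∫ α, (ker κp α x • fp α + ker κs α x • fs α) ∂sphereMeasure := rfl
  rw [h0]
  have h1 : (∫ α, (ker κp α x • fp α + ker κs α x • fs α) ∂sphereMeasure) i
      = (ContinuousLinearMap.proj (R := ℂ) (φ := fun _ : Fin 3 => ℂ) i)
          (∫ α, (ker κp α x • fp α + ker κs α x • fs α) ∂sphereMeasure) := rfl
  rw [h1, ← ContinuousLinearMap.integral_comp_comm _ (integrableC hcont)]
  have h2 : ∀ α : S2, (ContinuousLinearMap.proj (R := ℂ) (φ := fun _ : Fin 3 => ℂ) i)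
      (ker κp α x • fp α + ker κs α x • fs α)
      = ker κp α x * fp α i + ker κs α x * fs α i := by
    intro α
    simp [ContinuousLinearMap.proj_apply]
  have hint1 : Integrable (fun α : S2 => ker κp α x * fp α i) sphereMeasure :=
    integrableC ((contKer κp x).mul ((continuous_apply i).comp hfpc))
  have hint2 : Integrable (fun α : S2 => ker κs α x * fs α i) sphereMeasure :=
    integrableC ((contKer κs x).mul ((continuous_apply i).comp hfsc))
  rw [integral_congr_ae (ae_of_all _ h2), integral_add hint1 hint2]
  rfl

/-- If `f_p(α)` is always parallel to `α` and `f_s(α)·α = 0`, with `f_p, f_s` continuous, then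
the elastic Herglotz wave is smooth and satisfies the Navier equation everywhere. -/
theorem stmt_9 (μ lam ω : ℝ) (hμ : 0 < μ) (hlamμ : 0 < lam + μ) (hω : 0 < ω)
    (κp κs : ℝ) (hκp : κp = ω / Real.sqrt (lam + 2 * μ)) (hκs : κs = ω / Real.sqrt μ)
    (fp fs : sphere (0 : E3) 1 → V3)
    (hfpc : Continuous fp) (hfsc : Continuous fs)
    (hfp : ∀ α : sphere (0 : E3) 1, ∃ c : ℂ, fp α = fun i => c * (((α : E3) i : ℝ) : ℂ))
    (hfs : ∀ α : sphere (0 : E3) 1, ∑ j, fs α j * (((α : E3) j : ℝ) : ℂ) = 0) :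
    ContDiff ℝ (⊤ : ℕ∞) (herglotz κp κs fp fs) ∧
      ∀ x : E3, IsNavierSolutionAt μ lam ω (herglotz κp κs fp fs) x := by
  have hcontp : ∀ i, Continuous fun α : S2 => fp α i := fun i => (continuous_apply i).comp hfpc
  have hconts : ∀ i, Continuous fun α : S2 => fs α i := fun i => (continuous_apply i).comp hfsc
  have hU := herglotz_eq κp κs fp fs hfpc hfsc
  -- first derivatives of the components
  have hpd1 : ∀ i j, pd j (fun y => herglotz κp κs fp fs y i)
      = fun x => Ig κp (fun α => mker κp j α * fp α i) x
        + Ig κs (fun α => mker κs j α * fs α i) x := by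
    intro i j
    have h : (fun y => herglotz κp κs fp fs y i)
        = fun y => Ig κp (fun α => fp α i) y + Ig κs (fun α => fs α i) y := by
      rw [hU]
    rw [h, pd_add (diff_Ig κp (hcontp i)) (diff_Ig κs (hconts i)) j,
      pd_Ig κp (hcontp i) j, pd_Ig κs (hconts i) j]
  -- second derivatives of the components
  have hpd2 : ∀ i j, pd j (pd j (fun y => herglotz κp κs fp fs y i))
      = fun x => Ig κp (fun α => mker κp j α * (mker κp j α * fp α i)) x
        + Ig κs (fun α => mker κs j α * (mker κs j α * fs α i)) x := by
    intro i j
    rw [hpd1 i j,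
      pd_add (diff_Ig κp ((contMker κp j).fun_mul (hcontp i)))
        (diff_Ig κs ((contMker κs j).fun_mul (hconts i))) j,
      pd_Ig κp ((contMker κp j).fun_mul (hcontp i)) j,
      pd_Ig κs ((contMker κs j).fun_mul (hconts i)) j]
  -- Laplacian
  have hvl : ∀ x i, vecLap (herglotz κp κs fp fs) x i
      = -((κp : ℂ) ^ 2) * Ig κp (fun α => fp α i) x
        + -((κs : ℂ) ^ 2) * Ig κs (fun α => fs α i) x := by
    intro x i
    simp only [vecLap]
    rw [Finset.sum_congr rfl fun j _ => by rw [hpd2 i j]]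
    rw [Finset.sum_add_distrib, sum_m2 κp (hcontp i) x, sum_m2 κs (hconts i) x]
  -- the scalar function c(α) = Σ f_p(α)_j α_j
  set cf : S2 → ℂ := fun α => ∑ j, fp α j * (((α : E3) j : ℝ) : ℂ) with hcf_def
  have hcfc : Continuous cf := by
    apply continuous_finset_sum
    intro j _
    exact (hcontp j).mul (contCoord j)
  have hcfa : ∀ (α : S2) (i : Fin 3), cf α * (((α : E3) i : ℝ) : ℂ) = fp α i := by
    intro α i
    obtain ⟨c, hc⟩ := hfp α
    have h1 : cf α = c := by
      simp only [hcf_def, hc]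
      rw [show ∑ j : Fin 3, c * (((α : E3) j : ℝ) : ℂ) * (((α : E3) j : ℝ) : ℂ)
          = c * ∑ j : Fin 3, (((α : E3) j : ℝ) : ℂ) ^ 2 from by
        rw [Finset.mul_sum]; exact Finset.sum_congr rfl fun j _ => by ring]
      rw [coord_sq_c]; ring
    rw [h1, hc]
  -- divergence
  have hdiv : divg (herglotz κp κs fp fs)
      = Ig κp (fun α => Complex.I * (κp : ℂ) * cf α) := by
    funext x
    simp only [divg]
    rw [Finset.sum_congr rfl fun j _ => by rw [hpd1 j j]]
    rw [Finset.sum_add_distrib,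
      Ig_sum κp _ (fun j => (contMker κp j).fun_mul (hcontp j)) x,
      Ig_sum κs _ (fun j => (contMker κs j).fun_mul (hconts j)) x]
    have hs0 : (fun α : S2 => ∑ j, mker κs j α * fs α j) = fun _ => (0 : ℂ) := by
      funext α
      have : ∑ j : Fin 3, mker κs j α * fs α j
          = Complex.I * (κs : ℂ) * ∑ j, fs α j * (((α : E3) j : ℝ) : ℂ) := by
        rw [Finset.mul_sum]
        exact Finset.sum_congr rfl fun j _ => by simp only [mker]; ring
      rw [this, hfs α, mul_zero]
    have hp0 : (fun α : S2 => ∑ j, mker κp j α * fp α j)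
        = fun α => Complex.I * (κp : ℂ) * cf α := by
      funext α
      simp only [hcf_def]
      rw [Finset.mul_sum]
      exact Finset.sum_congr rfl fun j _ => by simp only [mker]; ring
    rw [hs0, hp0, Ig_zero]
    simp
  -- gradient of the divergence
  have hgr : ∀ x i, grad (divg (herglotz κp κs fp fs)) x i
      = -((κp : ℂ) ^ 2) * Ig κp (fun α => fp α i) x := by
    intro x i
    simp only [grad]
    rw [hdiv, pd_Ig κp (continuous_const.fun_mul hcfc) i]
    rw [Ig_congr κp (g₂ := fun α => -((κp : ℂ) ^ 2) * fp α i) fun α => ?_]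
    · exact Ig_const_mul κp _ _ x
    · simp only [mker]
      have h := hcfa α i
      linear_combination ((κp : ℂ) ^ 2 * cf α * (((α : E3) i : ℝ) : ℂ)) * Complex.I_mul_I
        - ((κp : ℂ) ^ 2) * h
  -- wave number identities
  have hp2 : (0 : ℝ) < lam + 2 * μ := by linarith
  have hpr : κp ^ 2 * (lam + 2 * μ) = ω ^ 2 := by
    rw [hκp, div_pow, Real.sq_sqrt hp2.le, div_mul_cancel₀ _ (ne_of_gt hp2)]
  have hsr : κs ^ 2 * μ = ω ^ 2 := by
    rw [hκs, div_pow, Real.sq_sqrt hμ.le, div_mul_cancel₀ _ (ne_of_gt hμ)]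
  have hpc : (κp : ℂ) ^ 2 * ((lam : ℂ) + 2 * (μ : ℂ)) = (ω : ℂ) ^ 2 := by
    exact_mod_cast hpr
  have hsc : (κs : ℂ) ^ 2 * (μ : ℂ) = (ω : ℂ) ^ 2 := by exact_mod_cast hsr
  constructor
  · rw [hU]
    refine contDiff_pi.2 fun i => ?_
    exact (contDiff_Ig_top κp (hcontp i)).add (contDiff_Ig_top κs (hconts i))
  · intro x
    unfold IsNavierSolutionAt
    funext i
    simp only [Pi.add_apply, Pi.smul_apply, Pi.zero_apply, Complex.real_smul]
    rw [hvl x i, hgr x i]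
    have hux : herglotz κp κs fp fs x i
        = Ig κp (fun α => fp α i) x + Ig κs (fun α => fs α i) x := by rw [hU]
    rw [hux]
    push_cast
    linear_combination (-(Ig κp (fun α => fp α i) x)) * hpc
      + (-(Ig κs (fun α => fs α i) x)) * hsc
end
end

section
/- Let κ > 0 and set j₀(z) = sin z / z and h₀^{(1)}(z) = −i e^{iz}/z for z > 0. Then there exist constants C > 0 and R₀ > 0 such that for all 0 < R < R₀ one has (h₀^{(1)})′(κR) ≠ 0 and | 4πi · j₀′(κR) / (κ · (h₀^{(1)})′(κR)) + (4π/3) κ² R³ | ≤ C · R⁵; that is, the eigenvalue λ_{0,0} = 4πi j₀′(κ_p R)/(κ_p h₀^{(1)′}(κ_p R)) of the n = 0 far field block of a small rigid sphere of radius R satisfies λ_{0,0} = −(4π/3) κ_p² R³ + O(R⁵) as R → 0. -/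
set_option maxHeartbeats 1000000


open Real

noncomputable section

/-- The spherical Bessel function of order zero, `j₀(z) = sin z / z`. -/
def sphBesselJ0 : ℝ → ℝ := fun z => Real.sin z / z

/-- The spherical Hankel function of the first kind of order zero, `h₀^{(1)}(z) = −i e^{iz}/z`. -/
def sphHankelH10 : ℝ → ℂ := fun z => -Complex.I * Complex.exp (Complex.I * z) / z

/-- Small-radius asymptotics of the `n = 0` eigenvalue:
`4πi j₀′(κR)/(κ h₀^{(1)′}(κR)) = −(4π/3) κ² R³ + O(R⁵)`. -/
theorem stmt_17 (κ : ℝ) (hκ : 0 < κ) :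
    ∃ C > (0 : ℝ), ∃ R₀ > (0 : ℝ), ∀ R : ℝ, 0 < R → R < R₀ →
      deriv sphHankelH10 (κ * R) ≠ 0 ∧
      ‖(4 * (π : ℂ) * Complex.I * ((deriv sphBesselJ0 (κ * R) : ℝ) : ℂ)
            / ((κ : ℂ) * deriv sphHankelH10 (κ * R))
          + ((4 * π / 3 : ℝ) : ℂ) * (κ : ℂ) ^ 2 * (R : ℂ) ^ 3)‖
        ≤ C * R ^ 5 := by
  refine ⟨8 * κ ^ 4, by positivity, 1 / (2 * κ), by positivity, fun R hR hR0 => ?_⟩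
  have hz : 0 < κ * R := mul_pos hκ hR
  have hz2 : κ * R ≤ 1 / 2 := by
    rw [lt_div_iff₀ (by positivity)] at hR0
    nlinarith
  have hzne : κ * R ≠ 0 := ne_of_gt hz
  have hζne : ((κ * R : ℝ) : ℂ) ≠ 0 := by exact_mod_cast hzne
  have hκc : (κ:ℂ) ≠ 0 := by exact_mod_cast hκ.ne'
  have hRc : (R:ℂ) ≠ 0 := by exact_mod_cast hR.ne'
  have hA : Complex.exp ((κ:ℂ)*R*Complex.I) ≠ 0 := Complex.exp_ne_zero _
  have hzI : (κ:ℂ)*R + Complex.I ≠ 0 := by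
    intro h
    have := congrArg Complex.im h
    simp at this
  have hζI : ((κ * R : ℝ):ℂ) + Complex.I ≠ 0 := by
    intro h
    have := congrArg Complex.im h
    simp at this
  have hD : (κ:ℂ) * ((κ:ℂ)*R + Complex.I) ≠ 0 := mul_ne_zero hκc hzI
  -- derivative of the Hankel function
  have hden : HasDerivAt (fun t : ℝ => (t : ℂ)) 1 (κ*R) := Complex.ofRealCLM.hasDerivAt
  have hlin : HasDerivAt (fun t : ℝ => Complex.I * (t:ℂ)) Complex.I (κ*R) := by
    simpa using hden.const_mul Complex.I
  have hexp := hlin.cexp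
  have hnum := hexp.const_mul (-Complex.I)
  have hH : HasDerivAt sphHankelH10
      ((-Complex.I * (Complex.exp (Complex.I * ((κ*R:ℝ):ℂ)) * Complex.I) * ((κ*R:ℝ):ℂ)
        - -Complex.I * Complex.exp (Complex.I * ((κ*R:ℝ):ℂ)) * 1) / ((κ*R:ℝ):ℂ)^2) (κ*R) :=
    hnum.div hden hζne
  have hHval : deriv sphHankelH10 (κ*R)
      = Complex.exp (((κ*R:ℝ):ℂ) * Complex.I) * (((κ*R:ℝ):ℂ) + Complex.I) / ((κ*R:ℝ):ℂ)^2 := by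
    rw [hH.deriv, mul_comm Complex.I ((κ*R:ℝ):ℂ)]
    linear_combination (-(Complex.exp (((κ*R:ℝ):ℂ)*Complex.I)) * ((κ*R:ℝ):ℂ) / ((κ*R:ℝ):ℂ)^2)
      * Complex.I_sq
  -- derivative of the Bessel function
  have hJ : HasDerivAt sphBesselJ0 ((Real.cos (κ*R) * (κ*R) - Real.sin (κ*R) * 1)/(κ*R)^2) (κ*R) :=
    (Real.hasDerivAt_sin (κ*R)).div (hasDerivAt_id (κ*R)) hzne
  have hJval : deriv sphBesselJ0 (κ*R) = (Real.cos (κ*R) * (κ*R) - Real.sin (κ*R)) / (κ*R)^2 := by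
    simpa using hJ.deriv
  -- the Hankel derivative is nonzero
  have hHA : Complex.exp (((κ*R:ℝ):ℂ) * Complex.I) ≠ 0 := Complex.exp_ne_zero _
  have hDne : deriv sphHankelH10 (κ*R) ≠ 0 := by
    rw [hHval]
    exact div_ne_zero (mul_ne_zero hHA hζI) (pow_ne_zero _ hζne)
  refine ⟨hDne, ?_⟩
  -- key algebraic identity
  have hBinv : Complex.exp (-((κ:ℂ)*R)*Complex.I) = (Complex.exp ((κ:ℂ)*R*Complex.I))⁻¹ := by
    rw [neg_mul, Complex.exp_neg]
  have hstep : ∀ x : ℂ, 4 * (π:ℂ) * Complex.I * (x / ((κ:ℂ)*R)^2)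
        / ((κ:ℂ) * (Complex.exp ((κ:ℂ)*R*Complex.I) * ((κ:ℂ)*R + Complex.I) / ((κ:ℂ)*R)^2))
      = 4 * (π:ℂ) * Complex.I * x * (Complex.exp ((κ:ℂ)*R*Complex.I))⁻¹
        / ((κ:ℂ) * ((κ:ℂ)*R + Complex.I)) := by
    intro x
    field_simp
  have hI2 : Complex.I^2 = -1 := Complex.I_sq
  have hI3 : Complex.I^3 = -Complex.I := by rw [pow_succ, hI2]; ring
  have hI4 : Complex.I^4 = 1 := by rw [pow_succ, hI3]; simp [Complex.I_mul_I]
  have hI5 : Complex.I^5 = Complex.I := by rw [pow_succ, hI4]; ring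
  have hkey : 4 * (π : ℂ) * Complex.I
          * (((Real.cos (κ*R) * (κ*R) - Real.sin (κ*R)) / (κ*R)^2 : ℝ) : ℂ)
          / ((κ : ℂ) * (Complex.exp ((((κ*R) : ℝ):ℂ) * Complex.I)
              * ((((κ*R):ℝ):ℂ) + Complex.I) / (((κ*R):ℝ):ℂ)^2))
        + ((4 * π / 3 : ℝ) : ℂ) * (κ : ℂ) ^ 2 * (R : ℂ) ^ 3
      = ((4*(π:ℂ)*Complex.I/3) * ((κ:ℂ)*R)^5
          + (2*(π:ℂ)*Complex.I*((κ:ℂ)*R) + 2*(π:ℂ))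
            * ((Complex.exp (-((κ:ℂ)*R)*Complex.I))^2
               - (1 + (-(2*((κ:ℂ)*R))*Complex.I) + (-(2*((κ:ℂ)*R))*Complex.I)^2/2
                  + (-(2*((κ:ℂ)*R))*Complex.I)^3/6 + (-(2*((κ:ℂ)*R))*Complex.I)^4/24)))
        / ((κ:ℂ) * ((κ:ℂ)*R + Complex.I)) := by
    push_cast
    rw [hstep, hBinv, Complex.cos, Complex.sin, neg_mul, Complex.exp_neg, div_add' _ _ _ hD]
    congr 1
    field_simp [hA]
    ring_nf
    simp only [hI2, hI3, hI4, hI5]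
    ring
  rw [hJval, hHval, hkey, norm_div]
  -- bound on the remainder ρ
  have huval : (-(2*((κ:ℂ)*R))*Complex.I) = ((-(2*(κ*R)) : ℝ) : ℂ) * Complex.I := by
    push_cast; ring
  have huabs : ‖-(2*((κ:ℂ)*R))*Complex.I‖ = 2*(κ*R) := by
    rw [huval, norm_mul, Complex.norm_real, Real.norm_eq_abs, Complex.norm_I, mul_one, abs_neg,
      abs_of_pos (by positivity)]
  have hB2 : (Complex.exp (-((κ:ℂ)*R)*Complex.I))^2 = Complex.exp (-(2*((κ:ℂ)*R))*Complex.I) := by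
    rw [sq, ← Complex.exp_add]
    congr 1
    ring
  have hsum : ∑ m ∈ Finset.range 5, (-(2*((κ:ℂ)*R))*Complex.I)^m / (m.factorial : ℂ)
      = 1 + (-(2*((κ:ℂ)*R))*Complex.I) + (-(2*((κ:ℂ)*R))*Complex.I)^2/2
        + (-(2*((κ:ℂ)*R))*Complex.I)^3/6 + (-(2*((κ:ℂ)*R))*Complex.I)^4/24 := by
    simp [Finset.sum_range_succ, Nat.factorial]
  have hρbound : ‖((Complex.exp (-((κ:ℂ)*R)*Complex.I))^2
        - (1 + (-(2*((κ:ℂ)*R))*Complex.I) + (-(2*((κ:ℂ)*R))*Complex.I)^2/2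
          + (-(2*((κ:ℂ)*R))*Complex.I)^3/6 + (-(2*((κ:ℂ)*R))*Complex.I)^4/24))‖
      ≤ (2*(κ*R))^5 / 100 := by
    rw [hB2, ← hsum]
    have hb := Complex.exp_bound (x := -(2*((κ:ℂ)*R))*Complex.I)
      (by rw [huabs]; linarith) (by norm_num : 0 < 5)
    rw [huabs] at hb
    calc ‖_‖ ≤ (2*(κ*R))^5 * ((5+1 : ℕ) * ((Nat.factorial 5 * 5 : ℕ) : ℝ)⁻¹) := by
          simpa using hb
      _ = (2*(κ*R))^5 / 100 := by norm_num [Nat.factorial]; try ring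
  -- bound the numerator
  have hT1 : ‖((4*(π:ℂ)*Complex.I/3) * ((κ:ℂ)*R)^5)‖ = 4*π/3*(κ*R)^5 := by
    have h : (4*(π:ℂ)*Complex.I/3) * ((κ:ℂ)*R)^5 = ((4*π/3*(κ*R)^5 : ℝ):ℂ) * Complex.I := by
      push_cast; ring
    rw [h, norm_mul, Complex.norm_real, Real.norm_eq_abs, Complex.norm_I, mul_one, abs_of_nonneg (by positivity)]
  have hT2a : ‖(2*(π:ℂ)*Complex.I*((κ:ℂ)*R) + 2*(π:ℂ))‖ ≤ 3*π := by
    have h1 : (2*(π:ℂ)*Complex.I*((κ:ℂ)*R)) = ((2*π*(κ*R) : ℝ):ℂ) * Complex.I := by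
      push_cast; ring
    have h2 : (2*(π:ℂ)) = ((2*π : ℝ):ℂ) := by push_cast; ring
    calc ‖(2*(π:ℂ)*Complex.I*((κ:ℂ)*R) + 2*(π:ℂ))‖
        ≤ ‖(2*(π:ℂ)*Complex.I*((κ:ℂ)*R))‖ + ‖(2*(π:ℂ))‖ :=
          norm_add_le _ _
      _ = 2*π*(κ*R) + 2*π := by
          rw [h1, h2, norm_mul, Complex.norm_real, Real.norm_eq_abs, Complex.norm_I, mul_one, Complex.norm_real, Real.norm_eq_abs,
            abs_of_nonneg (by positivity), abs_of_nonneg (by positivity)]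
      _ ≤ 3*π := by nlinarith [Real.pi_pos]
  have hnumb : ‖((4*(π:ℂ)*Complex.I/3) * ((κ:ℂ)*R)^5
        + (2*(π:ℂ)*Complex.I*((κ:ℂ)*R) + 2*(π:ℂ))
          * ((Complex.exp (-((κ:ℂ)*R)*Complex.I))^2
             - (1 + (-(2*((κ:ℂ)*R))*Complex.I) + (-(2*((κ:ℂ)*R))*Complex.I)^2/2
                + (-(2*((κ:ℂ)*R))*Complex.I)^3/6 + (-(2*((κ:ℂ)*R))*Complex.I)^4/24)))‖
      ≤ 8 * (κ*R)^5 := by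
    calc ‖_‖ ≤ ‖((4*(π:ℂ)*Complex.I/3) * ((κ:ℂ)*R)^5)‖
          + ‖((2*(π:ℂ)*Complex.I*((κ:ℂ)*R) + 2*(π:ℂ))
            * ((Complex.exp (-((κ:ℂ)*R)*Complex.I))^2
               - (1 + (-(2*((κ:ℂ)*R))*Complex.I) + (-(2*((κ:ℂ)*R))*Complex.I)^2/2
                  + (-(2*((κ:ℂ)*R))*Complex.I)^3/6 + (-(2*((κ:ℂ)*R))*Complex.I)^4/24)))‖ :=
        norm_add_le _ _
      _ ≤ 4*π/3*(κ*R)^5 + 3*π * ((2*(κ*R))^5 / 100) := by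
          rw [hT1, norm_mul]
          exact add_le_add le_rfl
            (mul_le_mul hT2a hρbound (norm_nonneg _) (by positivity))
      _ ≤ 8 * (κ*R)^5 := by
          have h32 : (2*(κ*R))^5 = 32*(κ*R)^5 := by ring
          rw [h32]
          nlinarith [Real.pi_lt_d2, pow_pos hz 5]
  -- bound the denominator
  have hdenb : κ ≤ ‖((κ:ℂ) * ((κ:ℂ)*R + Complex.I))‖ := by
    rw [norm_mul, Complex.norm_real, Real.norm_eq_abs, abs_of_pos hκ]
    have h1 : (1:ℝ) ≤ ‖((κ:ℂ)*R + Complex.I)‖ := by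
      have := Complex.abs_im_le_norm ((κ:ℂ)*R + Complex.I)
      simpa using this
    nlinarith
  calc ‖_‖ / ‖((κ:ℂ) * ((κ:ℂ)*R + Complex.I))‖
      ≤ (8 * (κ*R)^5) / κ :=
        div_le_div₀ (by positivity) hnumb hκ hdenb
    _ = 8 * κ^4 * R^5 := by field_simp
end
end
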